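/- For every real r > 2 and every θ ∈ (-π, π), one has |F(r e^{iθ})| ≤ r/((r-1)·ln(r-1)), where F(z) = z/((1+z)·Log(1+z)). Consequently, sup_{θ ∈ (-π,π)} |F(r e^{iθ})| → 0 as r → ∞; i.e., F(z) tends to 0 uniformly in θ as r = |z| → ∞. -/

import Mathlib

open Real Complex Filter

lemma key_bound (r : ℝ) (hr : 2 < r) (θ : ℝ) :
    ‖
        ((r : ℂ) * Complex.exp (θ * Complex.I) /
          ((1 + (r : ℂ) * Complex.exp (θ * Complex.I)) *
            Complex.log (1 + (r : ℂ) * Complex.exp (θ * Complex.I))))‖ ≤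
      r / ((r - 1) * Real.log (r - 1)) := by
  set z : ℂ := (r : ℂ) * Complex.exp (θ * Complex.I) with hzdef
  have hz : ‖z‖ = r := by
    simp [hzdef, Complex.norm_exp, abs_of_pos (by linarith : (0:ℝ) < r)]
  have h1 : r - 1 ≤ ‖1 + z‖ := by
    have h := norm_add_le (1 + z) (-1)
    simp only [add_neg_cancel_comm, norm_neg, norm_one] at h
    rw [hz] at h
    linarith
  have hr1 : 1 < r - 1 := by linarith
  have hlogpos : 0 < Real.log (r - 1) := Real.log_pos hr1
  have h2 : Real.log (r - 1) ≤ ‖Complex.log (1 + z)‖ := by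
    calc Real.log (r - 1) ≤ Real.log ‖1 + z‖ := by
          apply Real.log_le_log (by linarith) h1
      _ = (Complex.log (1 + z)).re := (Complex.log_re _).symm
      _ ≤ |(Complex.log (1 + z)).re| := le_abs_self _
      _ ≤ ‖Complex.log (1 + z)‖ := Complex.abs_re_le_norm _
  rw [norm_div, hz, norm_mul]
  gcongr

theorem stmt_6 :
    (∀ r : ℝ, 2 < r → ∀ θ ∈ Set.Ioo (-Real.pi) Real.pi,
      ‖
          ((r : ℂ) * Complex.exp (θ * Complex.I) /
            ((1 + (r : ℂ) * Complex.exp (θ * Complex.I)) *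
              Complex.log (1 + (r : ℂ) * Complex.exp (θ * Complex.I))))‖ ≤
        r / ((r - 1) * Real.log (r - 1))) ∧
    Tendsto
      (fun r : ℝ =>
        ⨆ θ : Set.Ioo (-Real.pi) Real.pi,
          ‖
            ((r : ℂ) * Complex.exp ((θ : ℝ) * Complex.I) /
              ((1 + (r : ℂ) * Complex.exp ((θ : ℝ) * Complex.I)) *
                Complex.log (1 + (r : ℂ) * Complex.exp ((θ : ℝ) * Complex.I))))‖)
      atTop (nhds 0) := by
  constructor
  · intro r hr θ _
    exact key_bound r hr θ
  · have hne : Nonempty (Set.Ioo (-Real.pi) Real.pi) :=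
      ⟨⟨0, by constructor <;> [linarith [Real.pi_pos]; exact Real.pi_pos]⟩⟩
    have htend : Tendsto (fun r : ℝ => 2 / Real.log (r - 1)) atTop (nhds 0) := by
      have h1 : Tendsto (fun r : ℝ => Real.log (r - 1)) atTop atTop :=
        Real.tendsto_log_atTop.comp (tendsto_atTop_add_const_right _ (-1) tendsto_id)
      simpa [div_eq_mul_inv] using h1.inv_tendsto_atTop.const_mul (2:ℝ)
    apply tendsto_of_tendsto_of_tendsto_of_le_of_le' tendsto_const_nhds htend
    · filter_upwards with r
      exact Real.iSup_nonneg fun θ => norm_nonneg _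
    · filter_upwards [eventually_gt_atTop (2:ℝ)] with r hr
      have hr1 : 1 < r - 1 := by linarith
      have hlogpos : 0 < Real.log (r - 1) := Real.log_pos hr1
      have h1 : r / ((r - 1) * Real.log (r - 1)) ≤ 2 / Real.log (r - 1) := by
        rw [div_le_div_iff₀ (by positivity) hlogpos]
        nlinarith [hlogpos]
      refine le_trans (ciSup_le fun θ => key_bound r hr θ) h1
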